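/- Let (M,d) be a metric space, X, Y ⊆ M, r₀ > 0 and μ ≥ 1, and suppose that every subcollection of the four r₀-thickened quadrants (X∩Y)_{r₀}, (X∩Yᶜ)_{r₀}, (Xᶜ∩Y)_{r₀}, (Xᶜ∩Yᶜ)_{r₀} is polynomially excisive with exponent μ. Then the collection of three sets X_{r₀}, (Xᶜ∩Y)_{r₀}, (Xᶜ∩Yᶜ)_{r₀} is polynomially excisive with exponent μ, and symmetrically so is Y_{r₀}, (X∩Yᶜ)_{r₀}, (Xᶜ∩Yᶜ)_{r₀}. -/
import Mathlib


open Metric Bornology Set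

/-- A collection of subsets indexed by `i ∈ S` is *polynomially excisive with exponent `μ`* if
for every `r ≥ 0`, the intersection of the `r`-thickenings is contained in the
`r^μ`-thickening of the intersection. -/
def PolyExcisiveOn {M : Type*} [MetricSpace M] {ι : Type*} (Z : ι → Set M) (S : Set ι)
    (μ : ℝ) : Prop :=
  ∀ r : ℝ, 0 ≤ r → (⋂ i ∈ S, cthickening r (Z i)) ⊆ cthickening (r ^ μ) (⋂ i ∈ S, Z i)

lemma polyPartition_aux {M : Type*} [MetricSpace M] {μ : ℝ} (Q : Fin 4 → Set M)
    (hpoly : ∀ S : Set (Fin 4), PolyExcisiveOn Q S μ) (i j k l : Fin 4) :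
    ∀ r : ℝ, 0 ≤ r →
      cthickening r (Q i ∪ Q j) ∩ cthickening r (Q k) ∩ cthickening r (Q l) ⊆
      cthickening (r ^ μ) ((Q i ∪ Q j) ∩ Q k ∩ Q l) := by
  intro r hr x hx
  obtain ⟨⟨hx1, hx2⟩, hx3⟩ := hx
  rw [cthickening_union] at hx1
  have mono : ∀ m : Fin 4, m = i ∨ m = j →
      Q m ∩ Q k ∩ Q l ⊆ (Q i ∪ Q j) ∩ Q k ∩ Q l := by
    rintro m (rfl | rfl) <;> intro y ⟨⟨h1, h2⟩, h3⟩ <;>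
      exact ⟨⟨by simp [h1], h2⟩, h3⟩
  rcases hx1 with h | h
  · have := hpoly {i, k, l} r hr (by
      simp only [mem_iInter, mem_insert_iff, mem_singleton_iff]
      rintro m (rfl | rfl | rfl) <;> assumption)
    refine Set.mem_of_subset_of_mem (cthickening_subset_of_subset _ ?_) this
    intro y hy
    simp only [mem_iInter, mem_insert_iff, mem_singleton_iff] at hy
    exact mono i (Or.inl rfl) ⟨⟨hy i (by simp), hy k (by simp)⟩, hy l (by simp)⟩
  · have := hpoly {j, k, l} r hr (by
      simp only [mem_iInter, mem_insert_iff, mem_singleton_iff]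
      rintro m (rfl | rfl | rfl) <;> assumption)
    refine Set.mem_of_subset_of_mem (cthickening_subset_of_subset _ ?_) this
    intro y hy
    simp only [mem_iInter, mem_insert_iff, mem_singleton_iff] at hy
    exact mono j (Or.inr rfl) ⟨⟨hy j (by simp), hy k (by simp)⟩, hy l (by simp)⟩

/-- If every subcollection of the four `r₀`-thickened quadrants of `X, Y` is polynomially
excisive with exponent `μ`, then the triples `X_{r₀}, (Xᶜ∩Y)_{r₀}, (Xᶜ∩Yᶜ)_{r₀}` and
`Y_{r₀}, (X∩Yᶜ)_{r₀}, (Xᶜ∩Yᶜ)_{r₀}` are polynomially excisive with exponent `μ`. -/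
theorem polyPartition_of_quadrants {M : Type*} [MetricSpace M] (X Y : Set M)
    (r₀ μ : ℝ) (hr₀ : 0 < r₀) (hμ : 1 ≤ μ)
    (Q : Fin 4 → Set M)
    (hQ : Q = ![cthickening r₀ (X ∩ Y), cthickening r₀ (X ∩ Yᶜ),
                cthickening r₀ (Xᶜ ∩ Y), cthickening r₀ (Xᶜ ∩ Yᶜ)])
    (hpoly : ∀ S : Set (Fin 4), PolyExcisiveOn Q S μ) :
    (∀ r : ℝ, 0 ≤ r →
      cthickening r (cthickening r₀ X) ∩ cthickening r (cthickening r₀ (Xᶜ ∩ Y)) ∩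
        cthickening r (cthickening r₀ (Xᶜ ∩ Yᶜ)) ⊆
      cthickening (r ^ μ)
        (cthickening r₀ X ∩ cthickening r₀ (Xᶜ ∩ Y) ∩ cthickening r₀ (Xᶜ ∩ Yᶜ))) ∧
    (∀ r : ℝ, 0 ≤ r →
      cthickening r (cthickening r₀ Y) ∩ cthickening r (cthickening r₀ (X ∩ Yᶜ)) ∩
        cthickening r (cthickening r₀ (Xᶜ ∩ Yᶜ)) ⊆
      cthickening (r ^ μ)
        (cthickening r₀ Y ∩ cthickening r₀ (X ∩ Yᶜ) ∩ cthickening r₀ (Xᶜ ∩ Yᶜ))) := by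
  have hQ0 : Q 0 = cthickening r₀ (X ∩ Y) := by rw [hQ]; rfl
  have hQ1 : Q 1 = cthickening r₀ (X ∩ Yᶜ) := by rw [hQ]; rfl
  have hQ2 : Q 2 = cthickening r₀ (Xᶜ ∩ Y) := by rw [hQ]; rfl
  have hQ3 : Q 3 = cthickening r₀ (Xᶜ ∩ Yᶜ) := by rw [hQ]; rfl
  have hX : cthickening r₀ X = Q 0 ∪ Q 1 := by
    rw [hQ0, hQ1, ← cthickening_union, Set.inter_union_compl]
  have hY : cthickening r₀ Y = Q 0 ∪ Q 2 := by
    rw [hQ0, hQ2, ← cthickening_union, Set.inter_comm X Y, Set.inter_comm Xᶜ Y,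
      Set.inter_union_compl]
  constructor
  · intro r hr
    rw [hX, ← hQ2, ← hQ3]
    exact polyPartition_aux Q hpoly 0 1 2 3 r hr
  · intro r hr
    rw [hY, ← hQ1, ← hQ3]
    exact polyPartition_aux Q hpoly 0 2 1 3 r hr
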